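/- For the backward Euler–Maruyama recursion for a stochastic oscillator mode, i.e. (1+τ²λ) v_{n+1} = v_n - τ λ u_n + ΔL_n and u_{n+1} = u_n + τ v_{n+1}, with λ > 0, τ > 0, ΔL_n mean zero with variance τ v_{ℓ} and independent of (u_n, v_n), the expected energy E_n = (1/2)E[v_n² + λ u_n²] satisfies the exact recursion E_{n+1} = (1 + τ² λ)^{-1} (E_n + (1/2) v_{ℓ} τ). -/

import Mathlib

open MeasureTheory ProbabilityTheory

theorem backward_EM_energy_recursion
    {Ω : Type*} [MeasureSpace Ω] [IsProbabilityMeasure (ℙ : Measure Ω)]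
    (lam τ vl : ℝ) (hlam : 0 < lam) (hτ : 0 < τ) (hvl : 0 ≤ vl)
    (u v ΔL : ℕ → Ω → ℝ)
    (hu : ∀ n, MemLp (u n) 2 ℙ) (hv : ∀ n, MemLp (v n) 2 ℙ)
    (hL : ∀ n, MemLp (ΔL n) 2 ℙ)
    (hLmean : ∀ n, ∫ ω, ΔL n ω = 0)
    (hLvar : ∀ n, ∫ ω, (ΔL n ω) ^ 2 = τ * vl)
    (hindep : ∀ n, IndepFun (fun ω => (u n ω, v n ω)) (ΔL n) ℙ)
    (hrecu : ∀ n ω, u (n + 1) ω = u n ω + τ * v (n + 1) ω)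
    (hrecv : ∀ n ω, (1 + τ ^ 2 * lam) * v (n + 1) ω = v n ω - τ * lam * u n ω + ΔL n ω)
    (E : ℕ → ℝ)
    (hE : ∀ n, E n = (1 / 2) * ∫ ω, ((v n ω) ^ 2 + lam * (u n ω) ^ 2)) :
    ∀ n, E (n + 1) = (1 + τ ^ 2 * lam)⁻¹ * (E n + (1 / 2) * vl * τ) := by
  intro n
  have ha : (0:ℝ) < 1 + τ ^ 2 * lam := by positivity
  have ha' : (1 + τ ^ 2 * lam) ≠ 0 := ne_of_gt ha
  -- independence of v n and ΔL n
  have hvL : IndepFun (v n) (ΔL n) ℙ := (hindep n).comp measurable_snd measurable_id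
  -- integrability facts
  have hv2 : ∀ m, Integrable (fun ω => (v m ω) ^ 2) ℙ := fun m => (hv m).integrable_sq
  have hu2 : ∀ m, Integrable (fun ω => (u m ω) ^ 2) ℙ := fun m => (hu m).integrable_sq
  have hL2 : Integrable (fun ω => (ΔL n ω) ^ 2) ℙ := (hL n).integrable_sq
  have hvi : Integrable (v n) ℙ := (hv n).integrable one_le_two
  have hLi : Integrable (ΔL n) ℙ := (hL n).integrable one_le_two
  have hmul : Integrable (fun ω => v n ω * ΔL n ω) ℙ := hvL.integrable_mul hvi hLi
  -- pointwise identity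
  have hpt : ∀ ω, (v (n+1) ω) ^ 2 + lam * (u (n+1) ω) ^ 2
      = (1 + τ ^ 2 * lam)⁻¹ *
        ((v n ω) ^ 2 + lam * (u n ω) ^ 2 + 2 * (v n ω * ΔL n ω) + (ΔL n ω) ^ 2) := by
    intro ω
    have h1 := hrecv n ω
    have h2 := hrecu n ω
    have hw : v (n + 1) ω = (v n ω - τ * lam * u n ω + ΔL n ω) / (1 + τ ^ 2 * lam) := by
      field_simp
      linarith
    rw [h2, hw]
    field_simp
    ring
  -- compute the integral
  have hint : ∫ ω, ((v (n+1) ω) ^ 2 + lam * (u (n+1) ω) ^ 2)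
      = (1 + τ ^ 2 * lam)⁻¹ *
        ((∫ ω, ((v n ω) ^ 2 + lam * (u n ω) ^ 2)) + 2 * (∫ ω, v n ω * ΔL n ω)
          + ∫ ω, (ΔL n ω) ^ 2) := by
    calc ∫ ω, ((v (n+1) ω) ^ 2 + lam * (u (n+1) ω) ^ 2)
        = ∫ ω, (1 + τ ^ 2 * lam)⁻¹ *
            ((v n ω) ^ 2 + lam * (u n ω) ^ 2 + 2 * (v n ω * ΔL n ω) + (ΔL n ω) ^ 2) := by
          exact integral_congr_ae (Filter.Eventually.of_forall hpt)
      _ = (1 + τ ^ 2 * lam)⁻¹ *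
            ∫ ω, ((v n ω) ^ 2 + lam * (u n ω) ^ 2 + 2 * (v n ω * ΔL n ω) + (ΔL n ω) ^ 2) :=
          integral_const_mul _ _
      _ = (1 + τ ^ 2 * lam)⁻¹ *
            ((∫ ω, ((v n ω) ^ 2 + lam * (u n ω) ^ 2)) + 2 * (∫ ω, v n ω * ΔL n ω)
              + ∫ ω, (ΔL n ω) ^ 2) := by
          congr 1
          have h4 : Integrable (fun ω => (v n ω) ^ 2 + lam * (u n ω) ^ 2) ℙ :=
            (hv2 n).add ((hu2 n).const_mul lam)
          have h5 : Integrable (fun ω => 2 * (v n ω * ΔL n ω)) ℙ := hmul.const_mul 2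
          have h3 : Integrable
              (fun ω => (v n ω) ^ 2 + lam * (u n ω) ^ 2 + 2 * (v n ω * ΔL n ω)) ℙ := h4.add h5
          rw [integral_add h3 hL2, integral_add h4 h5, integral_const_mul]
  -- the cross term vanishes
  have hcross : ∫ ω, v n ω * ΔL n ω = 0 := by
    have h := hvL.integral_fun_mul_eq_mul_integral hvi.aestronglyMeasurable hLi.aestronglyMeasurable
    rw [hLmean n, mul_zero] at h
    exact h
  rw [hE (n+1), hE n, hint, hcross, hLvar n]
  ring
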